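/- Let 0 < a < 1 and δ > 0. For every ε > 0 there exists ε₁ > 1 such that for all t, x_n with 0 < t < 1/4, 0 < x_n < 1/4 and ε₁ √t < x_n, one has t^{-1/2} · exp(-δ x_n²/t) · t^{-a} ≤ ε · x_n · a · (x_n²)^{-a-1}. -/

import Mathlib

open Real

lemma exp_neg_le_aux (u : ℝ) (hu : 0 < u) : Real.exp (-u) ≤ 4 / u ^ 2 := by
  have h1 : u/2 + 1 ≤ Real.exp (u/2) := Real.add_one_le_exp _
  have h2 : Real.exp (u/2) * Real.exp (u/2) = Real.exp u := by
    rw [← Real.exp_add]; ring_nf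
  have h3 : u^2/4 ≤ Real.exp u := by nlinarith [Real.exp_pos (u/2)]
  have h4 : (0:ℝ) < u^2/4 := by positivity
  rw [Real.exp_neg, inv_eq_one_div]
  calc 1 / Real.exp u ≤ 1 / (u^2/4) := one_div_le_one_div_of_le h4 h3
    _ = 4/u^2 := by field_simp

theorem stmt_1 (a δ : ℝ) (ha0 : 0 < a) (ha1 : a < 1) (hδ : 0 < δ) :
    ∀ ε : ℝ, 0 < ε → ∃ ε₁ : ℝ, 1 < ε₁ ∧ ∀ t xn : ℝ, 0 < t → t < 1/4 →
      0 < xn → xn < 1/4 → ε₁ * Real.sqrt t < xn →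
      t ^ (-(1:ℝ)/2) * Real.exp (-δ * xn ^ 2 / t) * t ^ (-a) ≤
        ε * xn * a * (xn ^ 2) ^ (-a - 1) := by
  intro ε hε
  set ε₁ : ℝ := 2 + 4 / (δ^2 * ε * a) with hε₁def
  have hε₁pos : 0 < ε₁ := by positivity
  have hε₁gt : 1 < ε₁ := by
    have h : 0 < 4 / (δ^2 * ε * a) := by positivity
    rw [hε₁def]; linarith
  refine ⟨ε₁, hε₁gt, ?_⟩
  intro t xn ht ht4 hx hx4 hlt
  have hxn2 : (0:ℝ) < xn ^ 2 := by positivity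
  -- squared inequality
  have hsq : ε₁ ^ 2 * t < xn ^ 2 := by
    have h0 : 0 ≤ ε₁ * Real.sqrt t := by positivity
    have := mul_self_lt_mul_self h0 hlt
    calc ε₁ ^ 2 * t = (ε₁ * Real.sqrt t) * (ε₁ * Real.sqrt t) := by
          linear_combination (-ε₁^2) * Real.sq_sqrt ht.le
      _ < xn * xn := this
      _ = xn ^ 2 := (sq xn).symm
  have hts : t < xn ^ 2 / ε₁ ^ 2 := by
    rw [lt_div_iff₀ (by positivity)]; linarith [hsq]
  -- exponential bound
  have hu : 0 < δ * xn ^ 2 / t := by positivity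
  have hexp : Real.exp (-δ * xn ^ 2 / t) ≤ 4 * t ^ 2 / (δ * xn ^ 2) ^ 2 := by
    have := exp_neg_le_aux (δ * xn ^ 2 / t) hu
    rw [show -δ * xn ^ 2 / t = -(δ * xn ^ 2 / t) by ring]
    calc Real.exp (-(δ * xn ^ 2 / t)) ≤ 4 / (δ * xn ^ 2 / t) ^ 2 := this
      _ = 4 * t ^ 2 / (δ * xn ^ 2) ^ 2 := by field_simp
  have ht38 : (0:ℝ) ≤ 3/2 - a := by linarith
  -- main chain
  have key : t ^ (-(1:ℝ)/2) * Real.exp (-δ * xn ^ 2 / t) * t ^ (-a)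
      ≤ (4 / δ ^ 2) * t ^ ((3:ℝ)/2 - a) / xn ^ 4 := by
    have h1 : t ^ (-(1:ℝ)/2) * Real.exp (-δ * xn ^ 2 / t) * t ^ (-a)
        ≤ t ^ (-(1:ℝ)/2) * (4 * t ^ 2 / (δ * xn ^ 2) ^ 2) * t ^ (-a) := by
      have p1 : (0:ℝ) < t ^ (-(1:ℝ)/2) := Real.rpow_pos_of_pos ht _
      have p2 : (0:ℝ) < t ^ (-a) := Real.rpow_pos_of_pos ht _
      exact mul_le_mul_of_nonneg_right (mul_le_mul_of_nonneg_left hexp p1.le) p2.le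
    have h2 : t ^ (-(1:ℝ)/2) * (4 * t ^ 2 / (δ * xn ^ 2) ^ 2) * t ^ (-a)
        = (4 / δ ^ 2) * t ^ ((3:ℝ)/2 - a) / xn ^ 4 := by
      have : t ^ ((3:ℝ)/2 - a) = t ^ (-(1:ℝ)/2) * t ^ (-a) * t ^ 2 := by
        rw [← Real.rpow_natCast t 2, ← Real.rpow_add ht, ← Real.rpow_add ht]
        congr 1; push_cast; ring
      rw [this]; field_simp
    exact le_of_le_of_eq h1 h2
  have key2 : t ^ ((3:ℝ)/2 - a) ≤ (xn ^ 2 / ε₁ ^ 2) ^ ((3:ℝ)/2 - a) :=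
    Real.rpow_le_rpow ht.le hts.le ht38
  -- rewrite (xn^2/ε₁^2)^(3/2-a)
  have hsplit : (xn ^ 2 / ε₁ ^ 2) ^ ((3:ℝ)/2 - a)
      = xn ^ ((3:ℝ) - 2*a) / ε₁ ^ ((3:ℝ) - 2*a) := by
    rw [Real.div_rpow (by positivity) (by positivity)]
    rw [← Real.rpow_natCast xn 2, ← Real.rpow_natCast ε₁ 2,
        ← Real.rpow_mul hx.le, ← Real.rpow_mul hε₁pos.le]
    norm_num; ring_nf
  -- final scalar bound
  have hscal : (4 / δ ^ 2) / ε₁ ^ ((3:ℝ) - 2*a) ≤ ε * a := by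
    have h1 : ε₁ ^ (1:ℝ) ≤ ε₁ ^ ((3:ℝ) - 2*a) :=
      Real.rpow_le_rpow_of_exponent_le hε₁gt.le (by linarith)
    have h2 : ε₁ ≤ ε₁ ^ ((3:ℝ) - 2*a) := by rwa [Real.rpow_one] at h1
    have h3 : (4 / δ ^ 2) / ε₁ ^ ((3:ℝ) - 2*a) ≤ (4 / δ ^ 2) / ε₁ := by
      apply div_le_div_of_nonneg_left (by positivity) hε₁pos h2
    have h4 : (4 / δ ^ 2) / ε₁ ≤ ε * a := by
      rw [div_le_iff₀ hε₁pos]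
      have : ε * a * ε₁ = 2 * (ε * a) + ε * a * (4 / (δ^2 * ε * a)) := by rw [hε₁def]; ring
      have h5 : ε * a * (4 / (δ^2 * ε * a)) = 4 / δ^2 := by field_simp
      nlinarith [mul_pos hε ha0]
    linarith
  -- assemble
  have hxpow : xn ^ ((3:ℝ) - 2*a) / xn ^ 4 = xn ^ (-(1:ℝ) - 2*a) := by
    rw [← Real.rpow_natCast xn 4, ← Real.rpow_sub hx]
    congr 1; push_cast; ring
  have hrhs : ε * xn * a * (xn ^ 2) ^ (-a - 1) = (ε * a) * xn ^ (-(1:ℝ) - 2*a) := by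
    have h1 : (xn ^ 2 : ℝ) ^ (-a-1) = xn ^ ((2:ℝ)*(-a-1)) := by
      rw [← Real.rpow_natCast xn 2, ← Real.rpow_mul hx.le]; norm_num
    have h2 : xn * xn ^ ((2:ℝ)*(-a-1)) = xn ^ (-(1:ℝ) - 2*a) := by
      nth_rewrite 1 [← Real.rpow_one xn]
      rw [← Real.rpow_add hx]; congr 1; ring
    rw [h1, ← h2]; ring
  calc t ^ (-(1:ℝ)/2) * Real.exp (-δ * xn ^ 2 / t) * t ^ (-a)
      ≤ (4 / δ ^ 2) * t ^ ((3:ℝ)/2 - a) / xn ^ 4 := key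
    _ ≤ (4 / δ ^ 2) * ((xn ^ 2 / ε₁ ^ 2) ^ ((3:ℝ)/2 - a)) / xn ^ 4 := by
        gcongr
    _ = ((4 / δ ^ 2) / ε₁ ^ ((3:ℝ) - 2*a)) * (xn ^ ((3:ℝ) - 2*a) / xn ^ 4) := by
        rw [hsplit]; ring
    _ = ((4 / δ ^ 2) / ε₁ ^ ((3:ℝ) - 2*a)) * xn ^ (-(1:ℝ) - 2*a) := by rw [hxpow]
    _ ≤ (ε * a) * xn ^ (-(1:ℝ) - 2*a) := by
        exact mul_le_mul_of_nonneg_right hscal (Real.rpow_pos_of_pos hx _).le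
    _ = ε * xn * a * (xn ^ 2) ^ (-a - 1) := hrhs.symm
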